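/- arXiv:1401.2588 — 8 statements merged into one kernel-verified Lean document; each statement's English description precedes it below -/
import Mathlib

section
/- Let A, B be finite sets of integers such that there do not exist a₁ < a₂ < a₃ in A and b₁ < b₂ < b₃ in B with a₁+b₃ = a₂+b₂ = a₃+b₁. Then |A+B| ≤ |(A−B) ∪ (B−A)|; i.e., (A,B) is not a sum-dominant (MSTD) pair. -/
open Pointwise

theorem stmt2 (A B : Finset ℤ)
    (h : ¬ ∃ a₁ a₂ a₃ b₁ b₂ b₃ : ℤ, a₁ ∈ A ∧ a₂ ∈ A ∧ a₃ ∈ A ∧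
      b₁ ∈ B ∧ b₂ ∈ B ∧ b₃ ∈ B ∧ a₁ < a₂ ∧ a₂ < a₃ ∧ b₁ < b₂ ∧ b₂ < b₃ ∧
      a₁ + b₃ = a₂ + b₂ ∧ a₂ + b₂ = a₃ + b₁) :
    (A + B).card ≤ ((A - B) ∪ (B - A)).card := by
  classical
  -- from h: no three representations of a common sum
  have key : ∀ s a₁ a₂ a₃ b₁ b₂ b₃ : ℤ, a₁ ∈ A → a₂ ∈ A → a₃ ∈ A →
      b₁ ∈ B → b₂ ∈ B → b₃ ∈ B → a₁ + b₁ = s → a₂ + b₂ = s → a₃ + b₃ = s →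
      a₁ < a₂ → a₂ < a₃ → False := by
    intro s a₁ a₂ a₃ b₁ b₂ b₃ ha₁ ha₂ ha₃ hb₁ hb₂ hb₃ e₁ e₂ e₃ l₁ l₂
    exact h ⟨a₁, a₂, a₃, b₃, b₂, b₁, ha₁, ha₂, ha₃, hb₃, hb₂, hb₁, l₁, l₂,
      by omega, by omega, by omega, by omega⟩
  -- fibers of the sum map
  set F : ℤ → Finset (ℤ × ℤ) :=
    fun s => (A ×ˢ B).filter (fun p => p.1 + p.2 = s) with hF
  have memF : ∀ s : ℤ, ∀ x : ℤ × ℤ, x ∈ F s → x.1 ∈ A ∧ x.2 ∈ B ∧ x.1 + x.2 = s := by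
    intro s x hx
    rw [hF, Finset.mem_filter, Finset.mem_product] at hx
    exact ⟨hx.1.1, hx.1.2, hx.2⟩
  have hfib : ∀ s, (F s).card ≤ 2 := by
    intro s
    by_contra hc
    push_neg at hc
    obtain ⟨p, q, r, hp, hq, hr, hpq, hpr, hqr⟩ := Finset.two_lt_card_iff.mp hc
    obtain ⟨pa, pb, ps⟩ := memF s p hp
    obtain ⟨qa, qb, qs⟩ := memF s q hq
    obtain ⟨ra, rb, rs⟩ := memF s r hr
    have key2 : ∀ u v w : ℤ × ℤ, u ∈ F s → v ∈ F s → w ∈ F s →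
        u.1 < v.1 → v.1 < w.1 → False := by
      intro u v w hu hv hw l₁ l₂
      obtain ⟨ua, ub, us⟩ := memF s u hu
      obtain ⟨va, vb, vs⟩ := memF s v hv
      obtain ⟨wa, wb, ws⟩ := memF s w hw
      exact key s u.1 v.1 w.1 u.2 v.2 w.2 ua va wa ub vb wb us vs ws l₁ l₂
    have n1 : p.1 ≠ q.1 := fun e => hpq (Prod.ext e (by omega))
    have n2 : p.1 ≠ r.1 := fun e => hpr (Prod.ext e (by omega))
    have n3 : q.1 ≠ r.1 := fun e => hqr (Prod.ext e (by omega))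
    rcases lt_trichotomy p.1 q.1 with h1 | h1 | h1
    · rcases lt_trichotomy q.1 r.1 with h2 | h2 | h2
      · exact key2 p q r hp hq hr h1 h2
      · exact n3 h2
      · rcases lt_trichotomy p.1 r.1 with h3 | h3 | h3
        · exact key2 p r q hp hr hq h3 h2
        · exact n2 h3
        · exact key2 r p q hr hp hq h3 h1
    · exact n1 h1
    · rcases lt_trichotomy p.1 r.1 with h2 | h2 | h2
      · exact key2 q p r hq hp hr h1 h2
      · exact n2 h2
      · rcases lt_trichotomy q.1 r.1 with h3 | h3 | h3
        · exact key2 q r p hq hr hp h3 h2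
        · exact n3 h3
        · exact key2 r q p hr hq hp h3 h1
  -- total count over sum fibers
  have hcard : (A ×ˢ B).card = ∑ s ∈ A + B, (F s).card := by
    refine Finset.card_eq_sum_card_fiberwise (fun p hp => ?_)
    rw [Finset.mem_coe, Finset.mem_product] at hp
    exact Finset.add_mem_add hp.1 hp.2
  have hfib1 : ∀ s ∈ A + B, 1 ≤ (F s).card := by
    intro s hs
    rw [Finset.mem_add] at hs
    obtain ⟨a, ha, b, hb, hab⟩ := hs
    have : (a, b) ∈ F s := by
      rw [hF, Finset.mem_filter, Finset.mem_product]
      exact ⟨⟨ha, hb⟩, hab⟩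
    exact Finset.card_pos.mpr ⟨_, this⟩
  set S₂ : Finset ℤ := (A + B).filter (fun s => (F s).card = 2) with hS₂
  have hsum : ∑ s ∈ A + B, (F s).card = (A + B).card + S₂.card := by
    have hcongr : ∀ s ∈ A + B, (F s).card = 1 + (if (F s).card = 2 then 1 else 0) := by
      intro s hs
      have h1 := hfib1 s hs
      have h2 := hfib s
      split_ifs with hh <;> omega
    rw [Finset.sum_congr rfl hcongr, Finset.sum_add_distrib, Finset.sum_const,
      smul_eq_mul, mul_one, hS₂, Finset.card_filter]
  -- maximal pairs on each difference diagonal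
  set M : Finset (ℤ × ℤ) := (A ×ˢ B).filter
    (fun p => ∀ q ∈ A ×ˢ B, q.1 - q.2 = p.1 - p.2 → q.1 ≤ p.1) with hM
  have hMsub : M ⊆ A ×ˢ B := Finset.filter_subset _ _
  have hMcard : M.card ≤ (A - B).card := by
    refine Finset.card_le_card_of_injOn (fun p => p.1 - p.2) (fun p hp => ?_) ?_
    · simp only [Finset.mem_coe, hM, Finset.mem_filter, Finset.mem_product] at hp
      exact Finset.sub_mem_sub hp.1.1 hp.1.2
    · intro p hp q hq e
      simp only [Finset.mem_coe, hM, Finset.mem_filter] at hp hq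
      simp only at e
      have h1 := hp.2 q hq.1 (by omega)
      have h2 := hq.2 p hp.1 (by omega)
      exact Prod.ext (by omega) (by omega)
  set U : Finset (ℤ × ℤ) := (A ×ˢ B) \ M with hUdef
  have hU : ∀ p ∈ U, ∃ q : ℤ × ℤ, q ∈ A ×ˢ B ∧ q.1 - q.2 = p.1 - p.2 ∧ p.1 < q.1 := by
    intro p hp
    rw [hUdef, Finset.mem_sdiff, hM, Finset.mem_filter] at hp
    have := hp.2
    push_neg at this
    obtain ⟨q, hq1, hq2, hq3⟩ := this hp.1
    exact ⟨q, hq1, hq2, by omega⟩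
  -- the injection from U into S₂
  set Φ : ℤ × ℤ → ℤ := fun p =>
    if hq : ∃ q : ℤ × ℤ, q ∈ A ×ˢ B ∧ q.1 - q.2 = p.1 - p.2 ∧ p.1 < q.1
    then p.1 + (Classical.choose hq).2 else 0 with hΦ
  have hfiber_eq : ∀ p ∈ U, ∀ (hex : ∃ q : ℤ × ℤ, q ∈ A ×ˢ B ∧
      q.1 - q.2 = p.1 - p.2 ∧ p.1 < q.1),
      Φ p = p.1 + (Classical.choose hex).2 ∧
      F (p.1 + (Classical.choose hex).2) =
        {(p.1, (Classical.choose hex).2), ((Classical.choose hex).1, p.2)} := by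
    intro p hp hex
    obtain ⟨hq1, hq2, hq3⟩ := Classical.choose_spec hex
    set q := Classical.choose hex with hqdef
    have hpAB : p ∈ A ×ˢ B := (Finset.mem_sdiff.mp hp).1
    rw [Finset.mem_product] at hpAB hq1
    constructor
    · rw [hΦ]
      exact dif_pos hex
    · set t : ℤ := p.1 + q.2 with ht
      have e1 : (p.1, q.2) ∈ F t := by
        rw [hF, Finset.mem_filter, Finset.mem_product]
        exact ⟨⟨hpAB.1, hq1.2⟩, rfl⟩
      have e2 : (q.1, p.2) ∈ F t := by
        rw [hF, Finset.mem_filter, Finset.mem_product]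
        exact ⟨⟨hq1.1, hpAB.2⟩, by simp; omega⟩
      have hne : ((p.1, q.2) : ℤ × ℤ) ≠ (q.1, p.2) := by
        intro e
        have := congrArg Prod.fst e
        simp only at this
        omega
      have hsub : ({(p.1, q.2), (q.1, p.2)} : Finset (ℤ × ℤ)) ⊆ F t := by
        intro x hx
        rcases Finset.mem_insert.mp hx with hx | hx
        · rw [hx]; exact e1
        · rw [Finset.mem_singleton.mp hx]; exact e2
      have hc2 : ({(p.1, q.2), (q.1, p.2)} : Finset (ℤ × ℤ)).card = 2 :=
        Finset.card_pair hne
      exact (Finset.eq_of_subset_of_card_le hsub (by rw [hc2]; exact hfib t)).symm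
  have hmaps : ∀ p ∈ U, Φ p ∈ S₂ := by
    intro p hp
    obtain ⟨hΦp, hFeq⟩ := hfiber_eq p hp (hU p hp)
    have hspec := Classical.choose_spec (hU p hp)
    set q := Classical.choose (hU p hp) with hqdef
    obtain ⟨hq1, hq2, hq3⟩ := hspec
    have hpAB : p ∈ A ×ˢ B := (Finset.mem_sdiff.mp hp).1
    rw [Finset.mem_product] at hpAB hq1
    rw [hΦp, hS₂, Finset.mem_filter]
    constructor
    · exact Finset.add_mem_add hpAB.1 hq1.2
    · rw [hFeq]
      apply Finset.card_pair
      intro e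
      have := congrArg Prod.fst e
      simp only at this
      omega
  have hinj : Set.InjOn Φ ↑U := by
    intro p₁ hp₁ p₂ hp₂ he
    rw [Finset.mem_coe] at hp₁ hp₂
    obtain ⟨hΦ1, hF1⟩ := hfiber_eq p₁ hp₁ (hU p₁ hp₁)
    obtain ⟨hΦ2, hF2⟩ := hfiber_eq p₂ hp₂ (hU p₂ hp₂)
    have hspec₁ := Classical.choose_spec (hU p₁ hp₁)
    have hspec₂ := Classical.choose_spec (hU p₂ hp₂)
    set q₁ := Classical.choose (hU p₁ hp₁) with hq₁def
    set q₂ := Classical.choose (hU p₂ hp₂) with hq₂def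
    obtain ⟨hq₁1, hq₁2, hq₁3⟩ := hspec₁
    obtain ⟨hq₂1, hq₂2, hq₂3⟩ := hspec₂
    have ht : p₁.1 + q₁.2 = p₂.1 + q₂.2 := by rw [← hΦ1, ← hΦ2, he]
    have hFF : ({(p₁.1, q₁.2), (q₁.1, p₁.2)} : Finset (ℤ × ℤ)) =
        {(p₂.1, q₂.2), (q₂.1, p₂.2)} := by
      rw [← hF1, ← hF2, ht]
    have m1 : ((p₁.1, q₁.2) : ℤ × ℤ) = (p₂.1, q₂.2) ∨
        ((p₁.1, q₁.2) : ℤ × ℤ) = (q₂.1, p₂.2) := by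
      have : ((p₁.1, q₁.2) : ℤ × ℤ) ∈ ({(p₂.1, q₂.2), (q₂.1, p₂.2)} : Finset (ℤ × ℤ)) := by
        rw [← hFF]; exact Finset.mem_insert_self _ _
      simpa using this
    have m2 : ((q₁.1, p₁.2) : ℤ × ℤ) = (p₂.1, q₂.2) ∨
        ((q₁.1, p₁.2) : ℤ × ℤ) = (q₂.1, p₂.2) := by
      have : ((q₁.1, p₁.2) : ℤ × ℤ) ∈ ({(p₂.1, q₂.2), (q₂.1, p₂.2)} : Finset (ℤ × ℤ)) := by
        rw [← hFF]
        exact Finset.mem_insert_of_mem (Finset.mem_singleton_self _)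
      simpa using this
    simp only [Prod.ext_iff] at m1 m2
    rcases m1 with ⟨e11, e12⟩ | ⟨e11, e12⟩ <;>
      rcases m2 with ⟨e21, e22⟩ | ⟨e21, e22⟩ <;>
      exact Prod.ext (by omega) (by omega)
  have hUS : U.card ≤ S₂.card := Finset.card_le_card_of_injOn Φ hmaps hinj
  have hUM : U.card + M.card = (A ×ˢ B).card :=
    Finset.card_sdiff_add_card_eq_card hMsub
  have hAB : (A + B).card ≤ (A - B).card := by
    have h1 : (A ×ˢ B).card = (A + B).card + S₂.card := by rw [hcard, hsum]
    omega
  exact le_trans hAB (Finset.card_le_card Finset.subset_union_left)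
end

section
/- There is no MSTD pair (A,B) of finite sets of integers with |A| = 2: for any finite sets A, B ⊂ ℤ with |A| = 2, we have |A+B| ≤ |(A−B) ∪ (B−A)|. -/
open Pointwise

theorem stmt3 (A B : Finset ℤ) (hA : A.card = 2) :
    (A + B).card ≤ ((A - B) ∪ (B - A)).card := by
  obtain ⟨x, y, hxy, rfl⟩ := Finset.card_eq_two.mp hA
  have key : (({x, y} : Finset ℤ) + B).image (fun t => x + y - t) = {x, y} - B := by
    ext z
    simp only [Finset.mem_image, Finset.mem_add, Finset.mem_sub, Finset.mem_insert,
      Finset.mem_singleton]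
    constructor
    · rintro ⟨t, ⟨a, (rfl | rfl), b, hb, rfl⟩, rfl⟩
      · exact ⟨y, Or.inr rfl, b, hb, by ring⟩
      · exact ⟨x, Or.inl rfl, b, hb, by ring⟩
    · rintro ⟨a, (rfl | rfl), b, hb, rfl⟩
      · exact ⟨y + b, ⟨y, Or.inr rfl, b, hb, rfl⟩, by ring⟩
      · exact ⟨x + b, ⟨x, Or.inl rfl, b, hb, rfl⟩, by ring⟩
  have hinj : Function.Injective (fun t : ℤ => x + y - t) := fun a b h => by
    simpa using h
  calc (({x, y} : Finset ℤ) + B).card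
      = ((({x, y} : Finset ℤ) + B).image (fun t => x + y - t)).card :=
        (Finset.card_image_of_injective _ hinj).symm
    _ = (({x, y} : Finset ℤ) - B).card := by rw [key]
    _ ≤ _ := Finset.card_le_card Finset.subset_union_left
end

section
/- For any n ≥ 0 and any nonempty B ⊆ {0,1,...,n}, the pair (A,B) with A = {0,1,...,n} is not MSTD: |A+B| ≤ |(A−B) ∪ (B−A)|. Specifically, if s and l are the smallest and largest elements of B and d = max{n−s, l}, then A+B = [s, n+l] has n+l−s+1 elements while ±(A−B) = [−d, d] has 2d+1 elements, and n+l−s+1 ≤ 2d+1. -/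
open Pointwise

theorem stmt8 (n : ℕ) (B : Finset ℤ) (hB : B.Nonempty)
    (hBsub : B ⊆ Finset.Icc (0 : ℤ) n) :
    let A : Finset ℤ := Finset.Icc (0 : ℤ) n
    let s : ℤ := B.min' hB
    let l : ℤ := B.max' hB
    let d : ℤ := max ((n : ℤ) - s) l
    A + B = Finset.Icc s ((n : ℤ) + l) ∧
      (A - B) ∪ (B - A) = Finset.Icc (-d) d ∧
      (n : ℤ) + l - s + 1 ≤ 2 * d + 1 ∧
      (A + B).card ≤ ((A - B) ∪ (B - A)).card := by
  intro A s l d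
  have hsB : s ∈ B := B.min'_mem hB
  have hlB : l ∈ B := B.max'_mem hB
  have hs : 0 ≤ s ∧ s ≤ (n : ℤ) := Finset.mem_Icc.mp (hBsub hsB)
  have hl : 0 ≤ l ∧ l ≤ (n : ℤ) := Finset.mem_Icc.mp (hBsub hlB)
  have hsl : s ≤ l := B.min'_le _ hlB
  have hd1 : (n : ℤ) - s ≤ d := le_max_left _ _
  have hd2 : l ≤ d := le_max_right _ _
  have h1 : A + B = Finset.Icc s ((n : ℤ) + l) := by
    ext x
    simp only [A, Finset.mem_add, Finset.mem_Icc]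
    constructor
    · rintro ⟨a, ha, b, hb, rfl⟩
      have hb1 : s ≤ b := B.min'_le _ hb
      have hb2 : b ≤ l := B.le_max' _ hb
      omega
    · intro hx
      by_cases h : x - s ≤ (n : ℤ)
      · exact ⟨x - s, by omega, s, hsB, by ring⟩
      · exact ⟨x - l, by omega, l, hlB, by ring⟩
  have h2 : (A - B) ∪ (B - A) = Finset.Icc (-d) d := by
    ext x
    simp only [A, Finset.mem_union, Finset.mem_sub, Finset.mem_Icc]
    constructor
    · rintro (⟨a, ha, b, hb, rfl⟩ | ⟨b, hb, a, ha, rfl⟩) <;>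
      · have hb1 : s ≤ b := B.min'_le _ hb
        have hb2 : b ≤ l := B.le_max' _ hb
        omega
    · rintro ⟨hx1, hx2⟩
      have hA : x ≤ (n : ℤ) - s ∨ x ≤ l := le_max_iff.mp hx2
      have hBx : -x ≤ (n : ℤ) - s ∨ -x ≤ l := le_max_iff.mp (by omega : -x ≤ d)
      by_cases hx0 : 0 ≤ x
      · rcases hA with h | h
        · exact Or.inl ⟨x + s, by omega, s, hsB, by ring⟩
        · exact Or.inr ⟨l, hlB, l - x, by omega, by ring⟩
      · rcases hBx with h | h
        · exact Or.inr ⟨s, hsB, s - x, by omega, by ring⟩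
        · exact Or.inl ⟨x + l, by omega, l, hlB, by ring⟩
  have h3 : (n : ℤ) + l - s + 1 ≤ 2 * d + 1 := by omega
  refine ⟨h1, h2, h3, ?_⟩
  rw [h1, h2, Int.card_Icc, Int.card_Icc]
  omega
end

section
/- Let a₁ ≥ 0 and d > 0 be integers, A = {a₁, a₁+d, a₁+2d} and B = {0, 2a₁, 2a₁+d, 2a₁+2d}. Then (A,B) is not an MSTD pair: |A+B| ≤ |(A−B) ∪ (B−A)|. -/
open Pointwise

theorem stmt10 (a₁ d : ℤ) (ha : 0 ≤ a₁) (hd : 0 < d) :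
    (({a₁, a₁ + d, a₁ + 2 * d} : Finset ℤ) +
        ({0, 2 * a₁, 2 * a₁ + d, 2 * a₁ + 2 * d} : Finset ℤ)).card ≤
      ((({a₁, a₁ + d, a₁ + 2 * d} : Finset ℤ) -
          ({0, 2 * a₁, 2 * a₁ + d, 2 * a₁ + 2 * d} : Finset ℤ)) ∪
        (({0, 2 * a₁, 2 * a₁ + d, 2 * a₁ + 2 * d} : Finset ℤ) -
          ({a₁, a₁ + d, a₁ + 2 * d} : Finset ℤ))).card := by
  set A : Finset ℤ := {a₁, a₁ + d, a₁ + 2 * d} with hA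
  set B : Finset ℤ := {0, 2 * a₁, 2 * a₁ + d, 2 * a₁ + 2 * d} with hB
  have hinj : Function.Injective (fun x : ℤ => x - (2 * a₁ + 2 * d)) := by
    intro x y h; simpa using h
  have hcard : (A + B).card = ((A + B).image (fun x : ℤ => x - (2 * a₁ + 2 * d))).card :=
    (Finset.card_image_of_injective _ hinj).symm
  rw [hcard]
  apply Finset.card_le_card
  intro x hx
  simp only [Finset.mem_image, Finset.mem_add] at hx
  obtain ⟨s, ⟨a, haA, b, hbB, rfl⟩, rfl⟩ := hx
  have haA' := haA
  have hbB' := hbB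
  simp only [hA, hB, Finset.mem_insert, Finset.mem_singleton] at haA' hbB'
  have m1 : a₁ ∈ A := by simp [hA]
  have m2 : a₁ + d ∈ A := by simp [hA]
  have m3 : a₁ + 2 * d ∈ A := by simp [hA]
  have n4 : 2 * a₁ + 2 * d ∈ B := by simp [hB]
  rw [Finset.mem_union, Finset.mem_sub, Finset.mem_sub]
  rcases hbB' with h' | h' | h' | h'
  · exact Or.inl ⟨a, haA, 2 * a₁ + 2 * d, n4, by omega⟩
  · rcases haA' with h | h | h
    · exact Or.inr ⟨b, hbB, a₁ + 2 * d, m3, by omega⟩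
    · exact Or.inr ⟨b, hbB, a₁ + d, m2, by omega⟩
    · exact Or.inr ⟨b, hbB, a₁, m1, by omega⟩
  · rcases haA' with h | h | h
    · exact Or.inr ⟨b, hbB, a₁ + 2 * d, m3, by omega⟩
    · exact Or.inr ⟨b, hbB, a₁ + d, m2, by omega⟩
    · exact Or.inr ⟨b, hbB, a₁, m1, by omega⟩
  · rcases haA' with h | h | h
    · exact Or.inr ⟨b, hbB, a₁ + 2 * d, m3, by omega⟩
    · exact Or.inr ⟨b, hbB, a₁ + d, m2, by omega⟩
    · exact Or.inr ⟨b, hbB, a₁, m1, by omega⟩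
end

section
/- Let A and B be finite sets of integers with |A| = 3, |B| = 4, and suppose (A,B) is MSTD, i.e., |A+B| > |(A−B) ∪ (B−A)|. Then there exists exactly one integer s such that |{(a,b) ∈ A×B : a+b = s}| = 3, and moreover for every d ∈ A−B we have −d ∈ A−B. -/
open Pointwise

namespace Stmt12Aux

open Finset

variable (A B : Finset ℤ)

noncomputable def r (s : ℤ) : ℕ := ((A ×ˢ B).filter (fun p => p.1 + p.2 = s)).card

noncomputable def d (t : ℤ) : ℕ := ((A ×ˢ B).filter (fun p => p.1 - p.2 = t)).card

lemma sum_r : ∑ s ∈ A + B, r A B s = A.card * B.card := by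
  rw [← Finset.card_product]
  exact (Finset.card_eq_sum_card_fiberwise (fun p hp => by
    rw [Finset.mem_coe, Finset.mem_product] at hp
    exact Finset.add_mem_add hp.1 hp.2)).symm

lemma sum_d : ∑ t ∈ A - B, d A B t = A.card * B.card := by
  rw [← Finset.card_product]
  exact (Finset.card_eq_sum_card_fiberwise (fun p hp => by
    rw [Finset.mem_coe, Finset.mem_product] at hp
    exact Finset.sub_mem_sub hp.1 hp.2)).symm

lemma r_le (s : ℤ) : r A B s ≤ A.card := by
  apply Finset.card_le_card_of_injOn (fun p => p.1)
  · intro p hp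
    simp only [Finset.mem_coe, Finset.mem_filter, Finset.mem_product] at hp
    exact hp.1.1
  · intro p hp q hq hpq
    simp only [Finset.coe_filter, Set.mem_setOf_eq, Finset.mem_product] at hp hq
    have := hp.2
    have := hq.2
    ext
    · exact hpq
    · dsimp only at hpq ⊢; omega

lemma d_le (t : ℤ) : d A B t ≤ A.card := by
  apply Finset.card_le_card_of_injOn (fun p => p.1)
  · intro p hp
    simp only [Finset.mem_coe, Finset.mem_filter, Finset.mem_product] at hp
    exact hp.1.1
  · intro p hp q hq hpq
    simp only [Finset.coe_filter, Set.mem_setOf_eq, Finset.mem_product] at hp hq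
    have := hp.2
    have := hq.2
    ext
    · exact hpq
    · dsimp only at hpq ⊢; omega

lemma r_pos {s : ℤ} (hs : s ∈ A + B) : 1 ≤ r A B s := by
  rw [Finset.mem_add] at hs
  obtain ⟨a, ha, b, hb, rfl⟩ := hs
  have : (a, b) ∈ (A ×ˢ B).filter (fun p => p.1 + p.2 = a + b) := by
    simp [Finset.mem_product, ha, hb]
  exact Finset.card_pos.mpr ⟨_, this⟩

lemma d_pos {t : ℤ} (ht : t ∈ A - B) : 1 ≤ d A B t := by
  rw [Finset.mem_sub] at ht
  obtain ⟨a, ha, b, hb, rfl⟩ := ht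
  have : (a, b) ∈ (A ×ˢ B).filter (fun p => p.1 - p.2 = a - b) := by
    simp [Finset.mem_product, ha, hb]
  exact Finset.card_pos.mpr ⟨_, this⟩

lemma sum_sq_r : ∑ s ∈ A + B, (r A B s) ^ 2 =
    (((A ×ˢ B) ×ˢ (A ×ˢ B)).filter (fun q => q.1.1 + q.1.2 = q.2.1 + q.2.2)).card := by
  have key : (((A ×ˢ B) ×ˢ (A ×ˢ B)).filter (fun q => q.1.1 + q.1.2 = q.2.1 + q.2.2)).card
      = ∑ s ∈ A + B, ((((A ×ˢ B) ×ˢ (A ×ˢ B)).filter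
          (fun q => q.1.1 + q.1.2 = q.2.1 + q.2.2)).filter (fun q => q.1.1 + q.1.2 = s)).card :=
    Finset.card_eq_sum_card_fiberwise (fun q hq => by
      simp only [Finset.mem_coe, Finset.mem_filter, Finset.mem_product] at hq
      exact Finset.add_mem_add hq.1.1.1 hq.1.1.2)
  rw [key]
  apply Finset.sum_congr rfl
  intro s _
  rw [Finset.filter_filter]
  have hset : (((A ×ˢ B) ×ˢ (A ×ˢ B)).filter
        (fun q => (q.1.1 + q.1.2 = q.2.1 + q.2.2) ∧ q.1.1 + q.1.2 = s))
      = ((A ×ˢ B).filter (fun p => p.1 + p.2 = s)) ×ˢ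
        ((A ×ˢ B).filter (fun p => p.1 + p.2 = s)) := by
    ext q
    simp only [Finset.mem_filter, Finset.mem_product]
    constructor
    · rintro ⟨⟨h1, h2⟩, e1, e2⟩
      exact ⟨⟨h1, e2⟩, h2, by omega⟩
    · rintro ⟨⟨h1, e1⟩, h2, e2⟩
      exact ⟨⟨h1, h2⟩, by omega, e1⟩
  rw [hset, Finset.card_product, r, sq]

lemma sum_sq_d : ∑ t ∈ A - B, (d A B t) ^ 2 =
    (((A ×ˢ B) ×ˢ (A ×ˢ B)).filter (fun q => q.1.1 - q.1.2 = q.2.1 - q.2.2)).card := by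
  have key : (((A ×ˢ B) ×ˢ (A ×ˢ B)).filter (fun q => q.1.1 - q.1.2 = q.2.1 - q.2.2)).card
      = ∑ t ∈ A - B, ((((A ×ˢ B) ×ˢ (A ×ˢ B)).filter
          (fun q => q.1.1 - q.1.2 = q.2.1 - q.2.2)).filter (fun q => q.1.1 - q.1.2 = t)).card :=
    Finset.card_eq_sum_card_fiberwise (fun q hq => by
      simp only [Finset.mem_coe, Finset.mem_filter, Finset.mem_product] at hq
      exact Finset.sub_mem_sub hq.1.1.1 hq.1.1.2)
  rw [key]
  apply Finset.sum_congr rfl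
  intro t _
  rw [Finset.filter_filter]
  have hset : (((A ×ˢ B) ×ˢ (A ×ˢ B)).filter
        (fun q => (q.1.1 - q.1.2 = q.2.1 - q.2.2) ∧ q.1.1 - q.1.2 = t))
      = ((A ×ˢ B).filter (fun p => p.1 - p.2 = t)) ×ˢ
        ((A ×ˢ B).filter (fun p => p.1 - p.2 = t)) := by
    ext q
    simp only [Finset.mem_filter, Finset.mem_product]
    constructor
    · rintro ⟨⟨h1, h2⟩, e1, e2⟩
      exact ⟨⟨h1, e2⟩, h2, by omega⟩
    · rintro ⟨⟨h1, e1⟩, h2, e2⟩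
      exact ⟨⟨h1, h2⟩, by omega, e1⟩
  rw [hset, Finset.card_product, d, sq]

lemma energy : ∑ s ∈ A + B, (r A B s) ^ 2 = ∑ t ∈ A - B, (d A B t) ^ 2 := by
  rw [sum_sq_r, sum_sq_d]
  refine Finset.card_bij' (fun q _ => ((q.1.1, q.2.2), (q.2.1, q.1.2)))
    (fun q _ => ((q.1.1, q.2.2), (q.2.1, q.1.2))) ?_ ?_ ?_ ?_
  · intro q hq
    simp only [Finset.mem_filter, Finset.mem_product] at hq ⊢
    exact ⟨⟨⟨hq.1.1.1, hq.1.2.2⟩, hq.1.2.1, hq.1.1.2⟩, by omega⟩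
  · intro q hq
    simp only [Finset.mem_filter, Finset.mem_product] at hq ⊢
    exact ⟨⟨⟨hq.1.1.1, hq.1.2.2⟩, hq.1.2.1, hq.1.1.2⟩, by omega⟩
  · intro q hq; rfl
  · intro q hq; rfl

lemma mem_of_r_pos {s : ℤ} (h : 0 < r A B s) : s ∈ A + B := by
  obtain ⟨p, hp⟩ := Finset.card_pos.mp h
  simp only [Finset.mem_filter, Finset.mem_product] at hp
  rw [← hp.2]
  exact Finset.add_mem_add hp.1.1 hp.1.2

lemma r_three_mem (hA : A.card = 3) {s : ℤ} (h : r A B s = 3) :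
    ∀ a ∈ A, s - a ∈ B := by
  intro a ha
  have hinj : Set.InjOn (fun p : ℤ × ℤ => p.1)
      ((A ×ˢ B).filter (fun p => p.1 + p.2 = s)) := by
    intro p hp q hq hpq
    simp only [Finset.coe_filter, Set.mem_setOf_eq, Finset.mem_product] at hp hq
    have := hp.2; have := hq.2
    ext
    · exact hpq
    · dsimp only at hpq ⊢; omega
  have himg : ((A ×ˢ B).filter (fun p => p.1 + p.2 = s)).image (fun p => p.1) = A := by
    apply Finset.eq_of_subset_of_card_le
    · intro x hx
      simp only [Finset.mem_image] at hx
      obtain ⟨p, hp, rfl⟩ := hx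
      simp only [Finset.mem_filter, Finset.mem_product] at hp
      exact hp.1.1
    · rw [Finset.card_image_of_injOn hinj, hA]
      exact le_of_eq h.symm
  rw [← himg] at ha
  simp only [Finset.mem_image] at ha
  obtain ⟨p, hp, rfl⟩ := ha
  simp only [Finset.mem_filter, Finset.mem_product] at hp
  have : s - p.1 = p.2 := by omega
  rw [this]
  exact hp.1.2

lemma quad (n : ℕ) (h1 : 1 ≤ n) (h3 : n ≤ 3) :
    n ^ 2 + 2 = 3 * n + 2 * (if n = 3 then 1 else 0) := by interval_cases n <;> simp

lemma sum_identity (S : Finset ℤ) (f : ℤ → ℕ) (hf : ∀ s ∈ S, 1 ≤ f s ∧ f s ≤ 3) :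
    ∑ s ∈ S, (f s) ^ 2 + 2 * S.card =
      3 * ∑ s ∈ S, f s + 2 * (S.filter (fun s => f s = 3)).card := by
  have h1 : ∑ s ∈ S, (f s) ^ 2 + 2 * S.card = ∑ s ∈ S, ((f s) ^ 2 + 2) := by
    rw [Finset.sum_add_distrib, Finset.sum_const, smul_eq_mul, mul_comm]
  have h2 : ∑ s ∈ S, ((f s) ^ 2 + 2)
      = ∑ s ∈ S, (3 * f s + 2 * (if f s = 3 then 1 else 0)) :=
    Finset.sum_congr rfl (fun s hs => quad _ (hf s hs).1 (hf s hs).2)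
  rw [h1, h2, Finset.sum_add_distrib, ← Finset.mul_sum, ← Finset.mul_sum, Finset.card_filter]

lemma card_sub_comm : (B - A).card = (A - B).card := by
  refine Finset.card_bij' (fun x _ => -x) (fun x _ => -x) ?_ ?_ ?_ ?_
  · intro x hx
    rw [Finset.mem_sub] at hx ⊢
    obtain ⟨b, hb, a, ha, rfl⟩ := hx
    exact ⟨a, ha, b, hb, by ring⟩
  · intro x hx
    rw [Finset.mem_sub] at hx ⊢
    obtain ⟨a, ha, b, hb, rfl⟩ := hx
    exact ⟨b, hb, a, ha, by ring⟩
  · intro x _; ring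
  · intro x _; ring

lemma card_ap3 {x δ : ℤ} (h : δ ≠ 0) :
    ({x, x + δ, x + 2 * δ} : Finset ℤ).card = 3 := by
  rw [Finset.card_insert_of_notMem (by
        simp only [Finset.mem_insert, Finset.mem_singleton, not_or]; omega),
      Finset.card_insert_of_notMem (by
        simp only [Finset.mem_singleton]; omega),
      Finset.card_singleton]

lemma card_ap4 {x δ : ℤ} (h : δ ≠ 0) :
    ({x, x + δ, x + 2 * δ, x + 3 * δ} : Finset ℤ).card = 4 := by
  rw [Finset.card_insert_of_notMem (by
        simp only [Finset.mem_insert, Finset.mem_singleton, not_or]; omega),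
      Finset.card_insert_of_notMem (by
        simp only [Finset.mem_insert, Finset.mem_singleton, not_or]; omega),
      Finset.card_insert_of_notMem (by
        simp only [Finset.mem_singleton]; omega),
      Finset.card_singleton]

lemma card_ap6 {x δ : ℤ} (h : δ ≠ 0) :
    ({x, x + δ, x + 2 * δ, x + 3 * δ, x + 4 * δ, x + 5 * δ} : Finset ℤ).card = 6 := by
  rw [Finset.card_insert_of_notMem (by
        simp only [Finset.mem_insert, Finset.mem_singleton, not_or]; omega),
      Finset.card_insert_of_notMem (by
        simp only [Finset.mem_insert, Finset.mem_singleton, not_or]; omega),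
      Finset.card_insert_of_notMem (by
        simp only [Finset.mem_insert, Finset.mem_singleton, not_or]; omega),
      Finset.card_insert_of_notMem (by
        simp only [Finset.mem_insert, Finset.mem_singleton, not_or]; omega),
      Finset.card_insert_of_notMem (by
        simp only [Finset.mem_singleton]; omega),
      Finset.card_singleton]

set_option maxHeartbeats 1000000 in
lemma t3_le_one (hA : A.card = 3) (hB : B.card = 4)
    (hMSTD : (A + B).card > ((A - B) ∪ (B - A)).card) :
    ((A + B).filter (fun s => r A B s = 3)).card ≤ 1 := by
  by_contra hcon
  push_neg at hcon
  obtain ⟨s, hs, s', hs', hne⟩ := Finset.one_lt_card.mp hcon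
  rw [Finset.mem_filter] at hs hs'
  have H : ∀ a ∈ A, s - a ∈ B := r_three_mem A B hA hs.2
  have H' : ∀ a ∈ A, s' - a ∈ B := r_three_mem A B hA hs'.2
  set δ : ℤ := s' - s with hδdef
  have hδ : δ ≠ 0 := by omega
  -- two distinct common values of s - A and s' - A inside B
  have hinj1 : Set.InjOn (fun a : ℤ => s - a) A := fun a _ b _ h => by
    have h' : s - a = s - b := h
    omega
  have hinj2 : Set.InjOn (fun a : ℤ => s' - a) A := fun a _ b _ h => by
    have h' : s' - a = s' - b := h
    omega
  set I1 := A.image (fun a => s - a) with hI1def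
  set I2 := A.image (fun a => s' - a) with hI2def
  have hI1 : I1.card = 3 := by rw [hI1def, Finset.card_image_of_injOn hinj1, hA]
  have hI2 : I2.card = 3 := by rw [hI2def, Finset.card_image_of_injOn hinj2, hA]
  have hUnion : I1 ∪ I2 ⊆ B := by
    apply Finset.union_subset
    · rw [hI1def, Finset.image_subset_iff]; exact H
    · rw [hI2def, Finset.image_subset_iff]; exact H'
  have hUcard : (I1 ∪ I2).card ≤ 4 := hB ▸ Finset.card_le_card hUnion
  have hIcard : 2 ≤ (I1 ∩ I2).card := by
    have := Finset.card_union_add_card_inter I1 I2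
    omega
  obtain ⟨u, hu, v, hv, huv⟩ := Finset.one_lt_card.mp (by omega : 1 < (I1 ∩ I2).card)
  rw [Finset.mem_inter] at hu hv
  obtain ⟨a1, ha1, ha1u⟩ := Finset.mem_image.mp hu.1
  obtain ⟨a2, ha2, ha2u⟩ := Finset.mem_image.mp hu.2
  obtain ⟨b1, hb1, hb1v⟩ := Finset.mem_image.mp hv.1
  obtain ⟨b2, hb2, hb2v⟩ := Finset.mem_image.mp hv.2
  have ha1u' : s - a1 = u := ha1u
  have ha2u' : s' - a2 = u := ha2u
  have hb1v' : s - b1 = v := hb1v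
  have hb2v' : s' - b2 = v := hb2v
  have ha2eq : a2 = a1 + δ := by omega
  have hb2eq : b2 = b1 + δ := by omega
  have hab : a1 ≠ b1 := by intro h; apply huv; omega
  rw [ha2eq] at ha2
  rw [hb2eq] at hb2
  -- A must be a 3-term AP with common difference δ
  have hkey : b1 = a1 + δ ∨ a1 = b1 + δ := by
    by_contra hk
    push_neg at hk
    have hsub : ({a1, b1, a1 + δ, b1 + δ} : Finset ℤ) ⊆ A := by
      intro x hx
      simp only [Finset.mem_insert, Finset.mem_singleton] at hx
      rcases hx with rfl | rfl | rfl | rfl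
      · exact ha1
      · exact hb1
      · exact ha2
      · exact hb2
    have hc4 : ({a1, b1, a1 + δ, b1 + δ} : Finset ℤ).card = 4 := by
      rw [Finset.card_insert_of_notMem (by
            simp only [Finset.mem_insert, Finset.mem_singleton, not_or]; omega),
          Finset.card_insert_of_notMem (by
            simp only [Finset.mem_insert, Finset.mem_singleton, not_or]; omega),
          Finset.card_insert_of_notMem (by
            simp only [Finset.mem_singleton]; omega),
          Finset.card_singleton]
    have := Finset.card_le_card hsub
    omega
  have hstruct : ∃ c : ℤ, c ∈ A ∧ c + δ ∈ A ∧ c + 2 * δ ∈ A := by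
    rcases hkey with h | h
    · refine ⟨a1, ha1, ?_, ?_⟩
      · rw [← h]; exact hb1
      · rw [show a1 + 2 * δ = b1 + δ by omega]; exact hb2
    · refine ⟨b1, hb1, ?_, ?_⟩
      · rw [← h]; exact ha1
      · rw [show b1 + 2 * δ = a1 + δ by omega]; exact ha2
  obtain ⟨c, hc0, hc1, hc2⟩ := hstruct
  have hAeq : A = {c, c + δ, c + 2 * δ} := by
    refine (Finset.eq_of_subset_of_card_le ?_ ?_).symm
    · intro x hx
      simp only [Finset.mem_insert, Finset.mem_singleton] at hx
      rcases hx with rfl | rfl | rfl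
      · exact hc0
      · exact hc1
      · exact hc2
    · rw [hA, card_ap3 hδ]
  set x : ℤ := s - c - 2 * δ with hxdef
  have hBeq : B = {x, x + δ, x + 2 * δ, x + 3 * δ} := by
    refine (Finset.eq_of_subset_of_card_le ?_ ?_).symm
    · intro w hw
      simp only [Finset.mem_insert, Finset.mem_singleton] at hw
      rcases hw with rfl | rfl | rfl | rfl
      · rw [show x = s - (c + 2 * δ) by omega]; exact H _ hc2
      · rw [show x + δ = s - (c + δ) by omega]; exact H _ hc1
      · rw [show x + 2 * δ = s - c by omega]; exact H _ hc0
      · rw [show x + 3 * δ = s' - c by omega]; exact H' _ hc0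
    · rw [hB, card_ap4 hδ]
  -- now |A+B| ≤ 6 and |A-B| ≥ 6
  have hShigh : (A + B).card ≤ 6 := by
    have hsub : A + B ⊆ ({c + x, c + x + δ, c + x + 2 * δ, c + x + 3 * δ,
        c + x + 4 * δ, c + x + 5 * δ} : Finset ℤ) := by
      intro w hw
      rw [Finset.mem_add] at hw
      obtain ⟨a, ha, b, hb, rfl⟩ := hw
      rw [hAeq] at ha
      rw [hBeq] at hb
      simp only [Finset.mem_insert, Finset.mem_singleton] at ha hb ⊢
      omega
    calc (A + B).card ≤ _ := Finset.card_le_card hsub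
      _ = 6 := by
        rw [show (({c + x, c + x + δ, c + x + 2 * δ, c + x + 3 * δ,
            c + x + 4 * δ, c + x + 5 * δ}) : Finset ℤ)
          = {c + x, (c + x) + δ, (c + x) + 2 * δ, (c + x) + 3 * δ,
            (c + x) + 4 * δ, (c + x) + 5 * δ} by ring_nf]
        exact card_ap6 hδ
  have hDlow : 6 ≤ (A - B).card := by
    set y : ℤ := c - x - 3 * δ with hydef
    have hsub : ({y, y + δ, y + 2 * δ, y + 3 * δ, y + 4 * δ, y + 5 * δ} : Finset ℤ)
        ⊆ A - B := by
      intro w hw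
      simp only [Finset.mem_insert, Finset.mem_singleton] at hw
      have mA0 : c ∈ A := hc0
      have mA1 : c + δ ∈ A := hc1
      have mA2 : c + 2 * δ ∈ A := hc2
      have mB0 : x ∈ B := by rw [hBeq]; exact Finset.mem_insert_self _ _
      have mB1 : x + δ ∈ B := by rw [hBeq]; exact Finset.mem_insert_of_mem (Finset.mem_insert_self _ _)
      have mB2 : x + 2 * δ ∈ B := by rw [hBeq]; exact Finset.mem_insert_of_mem (Finset.mem_insert_of_mem (Finset.mem_insert_self _ _))
      have mB3 : x + 3 * δ ∈ B := by rw [hBeq]; exact Finset.mem_insert_of_mem (Finset.mem_insert_of_mem (Finset.mem_insert_of_mem (Finset.mem_singleton_self _)))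
      rcases hw with rfl | rfl | rfl | rfl | rfl | rfl
      · rw [show y = c - (x + 3 * δ) by ring]
        exact Finset.sub_mem_sub mA0 mB3
      · rw [show y + δ = c - (x + 2 * δ) by ring]
        exact Finset.sub_mem_sub mA0 mB2
      · rw [show y + 2 * δ = c - (x + δ) by ring]
        exact Finset.sub_mem_sub mA0 mB1
      · rw [show y + 3 * δ = c - x by ring]
        exact Finset.sub_mem_sub mA0 mB0
      · rw [show y + 4 * δ = (c + δ) - x by ring]
        exact Finset.sub_mem_sub mA1 mB0
      · rw [show y + 5 * δ = (c + 2 * δ) - x by ring]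
        exact Finset.sub_mem_sub mA2 mB0
    calc (6 : ℕ) = _ := (card_ap6 hδ (x := y)).symm
      _ ≤ (A - B).card := Finset.card_le_card hsub
  have hDU : (A - B).card ≤ ((A - B) ∪ (B - A)).card :=
    Finset.card_le_card Finset.subset_union_left
  omega

end Stmt12Aux

open Stmt12Aux Finset

theorem stmt12 (A B : Finset ℤ) (hA : A.card = 3) (hB : B.card = 4)
    (hMSTD : (A + B).card > ((A - B) ∪ (B - A)).card) :
    (∃! s : ℤ, ((A ×ˢ B).filter (fun p => p.1 + p.2 = s)).card = 3) ∧
      ∀ d ∈ A - B, -d ∈ A - B := by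
  have hsum : ∑ s ∈ A + B, r A B s = 12 := by rw [sum_r, hA, hB]
  have hsumd : ∑ t ∈ A - B, d A B t = 12 := by rw [sum_d, hA, hB]
  have hfr : ∀ s ∈ A + B, 1 ≤ r A B s ∧ r A B s ≤ 3 :=
    fun s hs => ⟨r_pos A B hs, hA ▸ r_le A B s⟩
  have hfd : ∀ t ∈ A - B, 1 ≤ d A B t ∧ d A B t ≤ 3 :=
    fun t ht => ⟨d_pos A B ht, hA ▸ d_le A B t⟩
  have hid1 := sum_identity (A + B) (r A B) hfr
  have hid2 := sum_identity (A - B) (d A B) hfd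
  have hE := energy A B
  have ht3le := t3_le_one A B hA hB hMSTD
  have hcui := Finset.card_union_add_card_inter (A - B) (B - A)
  have hBA : (B - A).card = (A - B).card := card_sub_comm A B
  have hint_le : ((A - B) ∩ (B - A)).card ≤ (A - B).card :=
    Finset.card_le_card Finset.inter_subset_left
  rw [hsum] at hid1
  rw [hsumd] at hid2
  rw [hE] at hid1
  -- derive t3 = 1 and inter = A - B
  have ht3 : ((A + B).filter (fun s => r A B s = 3)).card = 1 := by omega
  have hint : ((A - B) ∩ (B - A)).card = (A - B).card := by omega
  constructor
  · obtain ⟨s0, hs0⟩ := Finset.card_eq_one.mp ht3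
    refine ⟨s0, ?_, ?_⟩
    · have : s0 ∈ (A + B).filter (fun s => r A B s = 3) := by
        rw [hs0]; exact Finset.mem_singleton_self s0
      exact (Finset.mem_filter.mp this).2
    · intro y hy
      have hy3 : r A B y = 3 := hy
      have hy' : y ∈ A + B := mem_of_r_pos A B (by omega)
      have : y ∈ (A + B).filter (fun s => r A B s = 3) :=
        Finset.mem_filter.mpr ⟨hy', hy⟩
      rw [hs0, Finset.mem_singleton] at this
      exact this
  · have heq : (A - B) ∩ (B - A) = A - B :=
      Finset.eq_of_subset_of_card_le Finset.inter_subset_left (le_of_eq hint.symm)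
    intro w hw
    have : w ∈ (A - B) ∩ (B - A) := heq.symm ▸ hw
    have hw2 : w ∈ B - A := (Finset.mem_inter.mp this).2
    rw [Finset.mem_sub] at hw2 ⊢
    obtain ⟨b, hb, a, ha, rfl⟩ := hw2
    exact ⟨a, ha, b, hb, by ring⟩
end

section
/- Let A, B be finite sets of integers. Then |A+A| − |A−A| = Σ_s (|X_s|−1)(|X_s|−2)/2 − Σ_d (|Y_d|−1)(|Y_d|−2)/2, where X_s = {(a,b) ∈ A×A : a+b = s} and Y_d = {(a,b) ∈ A×A : a−b = d}, and the sums are over s ∈ A+A and d ∈ A−A respectively. -/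
open Pointwise Finset

-- sum of fiber cards
lemma fib_sum (A : Finset ℤ) (g : ℤ × ℤ → ℤ) (S : Finset ℤ)
    (h : ∀ p ∈ A ×ˢ A, g p ∈ S) :
    ∑ s ∈ S, (((A ×ˢ A).filter (fun p => g p = s)).card : ℤ) = ((A ×ˢ A).card : ℤ) := by
  rw [Finset.card_eq_sum_card_fiberwise h]
  push_cast
  rfl

-- sum of squared fiber cards equals energy set card
lemma fib_sq (A : Finset ℤ) (g : ℤ × ℤ → ℤ) (S : Finset ℤ)
    (h : ∀ p ∈ A ×ˢ A, g p ∈ S) :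
    ∑ s ∈ S, (((A ×ˢ A).filter (fun p => g p = s)).card : ℤ)^2 =
      ((((A ×ˢ A) ×ˢ (A ×ˢ A)).filter (fun q => g q.1 = g q.2)).card : ℤ) := by
  have h2 : ∀ q ∈ ((A ×ˢ A) ×ˢ (A ×ˢ A)).filter (fun q => g q.1 = g q.2), g q.1 ∈ S := by
    intro q hq
    exact h _ (Finset.mem_product.mp (Finset.mem_filter.mp hq).1).1
  rw [Finset.card_eq_sum_card_fiberwise h2]
  push_cast
  apply Finset.sum_congr rfl
  intro s _
  have : (((A ×ˢ A) ×ˢ (A ×ˢ A)).filter (fun q => g q.1 = g q.2)).filter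
      (fun q => g q.1 = s) =
      ((A ×ˢ A).filter (fun p => g p = s)) ×ˢ ((A ×ˢ A).filter (fun p => g p = s)) := by
    ext q
    simp only [mem_filter, mem_product]
    constructor
    · rintro ⟨⟨⟨h1, h2⟩, he⟩, hs⟩
      exact ⟨⟨h1, hs⟩, h2, he ▸ hs⟩
    · rintro ⟨⟨h1, hs1⟩, h2, hs2⟩
      exact ⟨⟨⟨h1, h2⟩, hs1.trans hs2.symm⟩, hs1⟩
  rw [this, Finset.card_product]
  push_cast
  ring

theorem stmt14 (A : Finset ℤ) :
    ((A + A).card : ℤ) - ((A - A).card : ℤ) =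
      (∑ s ∈ A + A,
          ((((A ×ˢ A).filter (fun p => p.1 + p.2 = s)).card : ℤ) - 1) *
            ((((A ×ˢ A).filter (fun p => p.1 + p.2 = s)).card : ℤ) - 2) / 2)
        - ∑ d ∈ A - A,
            ((((A ×ˢ A).filter (fun p => p.1 - p.2 = d)).card : ℤ) - 1) *
              ((((A ×ˢ A).filter (fun p => p.1 - p.2 = d)).card : ℤ) - 2) / 2 := by
  have hadd : ∀ p ∈ A ×ˢ A, p.1 + p.2 ∈ A + A := by
    intro p hp; simp only [mem_product] at hp; exact Finset.add_mem_add hp.1 hp.2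
  have hsub : ∀ p ∈ A ×ˢ A, p.1 - p.2 ∈ A - A := by
    intro p hp; simp only [mem_product] at hp; exact Finset.sub_mem_sub hp.1 hp.2
  -- energies equal
  have hE : ((((A ×ˢ A) ×ˢ (A ×ˢ A)).filter (fun q => q.1.1 + q.1.2 = q.2.1 + q.2.2)).card : ℤ)
      = ((((A ×ˢ A) ×ˢ (A ×ˢ A)).filter (fun q => q.1.1 - q.1.2 = q.2.1 - q.2.2)).card : ℤ) := by
    congr 1
    apply Finset.card_bij (fun q _ => ((q.1.1, q.2.2), (q.2.1, q.1.2)))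
    · rintro ⟨⟨a,b⟩,⟨c,d⟩⟩ hq
      simp only [mem_filter, mem_product] at hq ⊢
      refine ⟨⟨⟨?_, ?_⟩, ?_, ?_⟩, by omega⟩ <;> tauto
    · rintro ⟨⟨a,b⟩,⟨c,d⟩⟩ hq ⟨⟨a',b'⟩,⟨c',d'⟩⟩ hq' he
      simp only [Prod.mk.injEq] at he ⊢
      omega
    · rintro ⟨⟨a,b⟩,⟨c,d⟩⟩ hq
      refine ⟨((a,d),(c,b)), ?_, ?_⟩
      · simp only [mem_filter, mem_product] at hq ⊢
        refine ⟨⟨⟨?_, ?_⟩, ?_, ?_⟩, by omega⟩ <;> tauto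
      · rfl
  have hS := fib_sum A (fun p => p.1 + p.2) (A + A) hadd
  have hS' := fib_sum A (fun p => p.1 - p.2) (A - A) hsub
  have hQ := fib_sq A (fun p => p.1 + p.2) (A + A) hadd
  have hQ' := fib_sq A (fun p => p.1 - p.2) (A - A) hsub
  beta_reduce at hQ hQ' hS hS'
  rw [hE, ← hQ'] at hQ
  rw [← hS'] at hS
  clear hE hQ' hS'
  -- rewrite each summand division
  have hdvd : ∀ n : ℤ, (2:ℤ) ∣ (n - 1) * (n - 2) := by
    intro n
    obtain ⟨k, hk⟩ := Int.even_mul_succ_self (n - 2)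
    exact ⟨k, by linarith⟩
  rw [← Int.sum_div (fun s _ => hdvd _), ← Int.sum_div (fun d _ => hdvd _)]
  have e1 : ∑ s ∈ A + A, ((((A ×ˢ A).filter (fun p => p.1 + p.2 = s)).card : ℤ) - 1) *
      ((((A ×ˢ A).filter (fun p => p.1 + p.2 = s)).card : ℤ) - 2)
      = (∑ s ∈ A + A, (((A ×ˢ A).filter (fun p => p.1 + p.2 = s)).card : ℤ)^2)
        - 3 * (∑ s ∈ A + A, (((A ×ˢ A).filter (fun p => p.1 + p.2 = s)).card : ℤ))
        + 2 * ((A + A).card : ℤ) := by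
    rw [Finset.mul_sum, ← Finset.sum_sub_distrib, Finset.card_eq_sum_ones (A + A)]
    push_cast
    rw [Finset.mul_sum, ← Finset.sum_add_distrib]
    exact Finset.sum_congr rfl (fun s _ => by ring)
  have e2 : ∑ d ∈ A - A, ((((A ×ˢ A).filter (fun p => p.1 - p.2 = d)).card : ℤ) - 1) *
      ((((A ×ˢ A).filter (fun p => p.1 - p.2 = d)).card : ℤ) - 2)
      = (∑ d ∈ A - A, (((A ×ˢ A).filter (fun p => p.1 - p.2 = d)).card : ℤ)^2)
        - 3 * (∑ d ∈ A - A, (((A ×ˢ A).filter (fun p => p.1 - p.2 = d)).card : ℤ))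
        + 2 * ((A - A).card : ℤ) := by
    rw [Finset.mul_sum, ← Finset.sum_sub_distrib, Finset.card_eq_sum_ones (A - A)]
    push_cast
    rw [Finset.mul_sum, ← Finset.sum_add_distrib]
    exact Finset.sum_congr rfl (fun d _ => by ring)
  rw [e1, e2, hQ, hS]
  omega
end

section
/- For integers n ≥ 2k+1 ≥ 1, suppose the pair (A,B) of subsets of {0,...,n} is a rich MSTD pair with fringe tuple (L,L',R,R';k), i.e., A ∩ [0,k] = L, B ∩ [0,k] = L', (n−A) ∩ [0,k] = R, (n−B) ∩ [0,k] = R', [k+1, 2n−k−1] ⊆ A+B, and |(L+L') ∩ [0,k]| + |(R+R') ∩ [0,k]| > 2·|((L+R') ∩ [0,k]) ∪ ((L'+R) ∩ [0,k])|. Then |A+B| > |(A−B) ∪ (B−A)|. -/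
open Pointwise

theorem stmt16 (n k : ℤ) (hk : 0 ≤ k) (hn : 2 * k + 1 ≤ n)
    (A B L L' R R' : Finset ℤ)
    (hA : A ⊆ Finset.Icc 0 n) (hB : B ⊆ Finset.Icc 0 n)
    (hL : A ∩ Finset.Icc 0 k = L)
    (hL' : B ∩ Finset.Icc 0 k = L')
    (hR : (A.image (fun a => n - a)) ∩ Finset.Icc 0 k = R)
    (hR' : (B.image (fun b => n - b)) ∩ Finset.Icc 0 k = R')
    (hmid : Finset.Icc (k + 1) (2 * n - k - 1) ⊆ A + B)
    (hfringe : ((L + L') ∩ Finset.Icc 0 k).card + ((R + R') ∩ Finset.Icc 0 k).card >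
      2 * (((L + R') ∩ Finset.Icc 0 k) ∪ ((L' + R) ∩ Finset.Icc 0 k)).card) :
    (A + B).card > ((A - B) ∪ (B - A)).card := by
  classical
  have hAb : ∀ a ∈ A, 0 ≤ a ∧ a ≤ n := fun a ha => by
    have := hA ha; simpa [Finset.mem_Icc] using this
  have hBb : ∀ b ∈ B, 0 ≤ b ∧ b ≤ n := fun b hb => by
    have := hB hb; simpa [Finset.mem_Icc] using this
  have hLmem : ∀ x, x ∈ L ↔ x ∈ A ∧ 0 ≤ x ∧ x ≤ k := fun x => by
    rw [← hL]; simp [Finset.mem_inter, Finset.mem_Icc, and_assoc]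
  have hL'mem : ∀ x, x ∈ L' ↔ x ∈ B ∧ 0 ≤ x ∧ x ≤ k := fun x => by
    rw [← hL']; simp [Finset.mem_inter, Finset.mem_Icc, and_assoc]
  have hRmem : ∀ x, x ∈ R ↔ (∃ a ∈ A, n - a = x) ∧ 0 ≤ x ∧ x ≤ k := fun x => by
    rw [← hR]; simp [Finset.mem_inter, Finset.mem_Icc, and_assoc]
  have hR'mem : ∀ x, x ∈ R' ↔ (∃ b ∈ B, n - b = x) ∧ 0 ≤ x ∧ x ≤ k := fun x => by
    rw [← hR']; simp [Finset.mem_inter, Finset.mem_Icc, and_assoc]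
  set T1 := Finset.Icc (k + 1) (2 * n - k - 1) with hT1
  set T2 := (L + L') ∩ Finset.Icc 0 k with hT2
  set T3 := ((R + R') ∩ Finset.Icc 0 k).image (fun s => 2 * n - s) with hT3
  set U := ((L + R') ∩ Finset.Icc 0 k) ∪ ((L' + R) ∩ Finset.Icc 0 k) with hU
  -- lower bound on |A+B|
  have hsub : T1 ∪ T2 ∪ T3 ⊆ A + B := by
    intro x hx
    simp only [hT1, hT2, hT3, Finset.mem_union, Finset.mem_image] at hx
    rcases hx with (hx | hx) | ⟨s, hs, rfl⟩
    · exact hmid hx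
    · obtain ⟨hx1, _⟩ := Finset.mem_inter.mp hx
      obtain ⟨a, ha, b, hb, rfl⟩ := Finset.mem_add.mp hx1
      exact Finset.add_mem_add ((hLmem a).mp ha).1 ((hL'mem b).mp hb).1
    · obtain ⟨hs1, _⟩ := Finset.mem_inter.mp hs
      obtain ⟨r, hr, r', hr', rfl⟩ := Finset.mem_add.mp hs1
      obtain ⟨⟨a, ha, hra⟩, _, _⟩ := (hRmem r).mp hr
      obtain ⟨⟨b, hb, hrb⟩, _, _⟩ := (hR'mem r').mp hr'
      have : 2 * n - (r + r') = a + b := by omega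
      rw [this]; exact Finset.add_mem_add ha hb
  have hT2b : ∀ x ∈ T2, 0 ≤ x ∧ x ≤ k := fun x hx => by
    have := (Finset.mem_inter.mp hx).2
    simpa [Finset.mem_Icc] using this
  have hT3b : ∀ x ∈ T3, 2 * n - k ≤ x ∧ x ≤ 2 * n := fun x hx => by
    simp only [hT3, Finset.mem_image] at hx
    obtain ⟨s, hs, rfl⟩ := hx
    have := (Finset.mem_inter.mp hs).2
    simp only [Finset.mem_Icc] at this
    omega
  have hd12 : Disjoint T1 T2 := by
    rw [Finset.disjoint_left]
    intro x hx1 hx2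
    have h1 := Finset.mem_Icc.mp hx1
    have h2 := hT2b x hx2
    omega
  have hd13 : Disjoint (T1 ∪ T2) T3 := by
    rw [Finset.disjoint_left]
    intro x hx1 hx3
    have h3 := hT3b x hx3
    rcases Finset.mem_union.mp hx1 with h | h
    · have := Finset.mem_Icc.mp h; omega
    · have := hT2b x h; omega
  have hcardU : (T1 ∪ T2 ∪ T3).card = T1.card + T2.card + T3.card := by
    rw [Finset.card_union_of_disjoint hd13, Finset.card_union_of_disjoint hd12]
  have cT1 : T1.card = (2 * n - 2 * k - 1).toNat := by
    rw [hT1, Int.card_Icc]; congr 1; ring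
  have cT3 : T3.card = ((R + R') ∩ Finset.Icc 0 k).card := by
    rw [hT3]
    exact Finset.card_image_of_injective _ (fun x y h => by omega)
  have hlow : (2 * n - 2 * k - 1).toNat + T2.card + ((R + R') ∩ Finset.Icc 0 k).card
      ≤ (A + B).card := by
    calc (2 * n - 2 * k - 1).toNat + T2.card + ((R + R') ∩ Finset.Icc 0 k).card
        = (T1 ∪ T2 ∪ T3).card := by rw [hcardU, cT1, cT3]
      _ ≤ (A + B).card := Finset.card_le_card hsub
  -- upper bound on the difference set
  have key1 : ∀ x, (∃ a ∈ A, ∃ b ∈ B, a - b = x) → n - k ≤ x → n - x ∈ U := by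
    rintro x ⟨a, ha, b, hb, rfl⟩ hx
    obtain ⟨ha0, han⟩ := hAb a ha
    obtain ⟨hb0, hbn⟩ := hBb b hb
    have hbL : b ∈ L' := (hL'mem b).mpr ⟨hb, by omega, by omega⟩
    have hrR : n - a ∈ R := (hRmem (n - a)).mpr ⟨⟨a, ha, rfl⟩, by omega, by omega⟩
    have hmem : n - (a - b) ∈ L' + R := by
      have := Finset.add_mem_add hbL hrR
      have he : b + (n - a) = n - (a - b) := by ring
      rwa [he] at this
    refine Finset.mem_union_right _ (Finset.mem_inter.mpr ⟨hmem, ?_⟩)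
    simp only [Finset.mem_Icc]; omega
  have key2 : ∀ x, (∃ b ∈ B, ∃ a ∈ A, b - a = x) → n - k ≤ x → n - x ∈ U := by
    rintro x ⟨b, hb, a, ha, rfl⟩ hx
    obtain ⟨ha0, han⟩ := hAb a ha
    obtain ⟨hb0, hbn⟩ := hBb b hb
    have haL : a ∈ L := (hLmem a).mpr ⟨ha, by omega, by omega⟩
    have hrR : n - b ∈ R' := (hR'mem (n - b)).mpr ⟨⟨b, hb, rfl⟩, by omega, by omega⟩
    have hmem : n - (b - a) ∈ L + R' := by
      have := Finset.add_mem_add haL hrR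
      have he : a + (n - b) = n - (b - a) := by ring
      rwa [he] at this
    refine Finset.mem_union_left _ (Finset.mem_inter.mpr ⟨hmem, ?_⟩)
    simp only [Finset.mem_Icc]; omega
  have hDsub : (A - B) ∪ (B - A) ⊆
      Finset.Icc (k + 1 - n) (n - k - 1) ∪ U.image (fun u => n - u)
        ∪ U.image (fun u => u - n) := by
    intro x hx
    rcases Finset.mem_union.mp hx with hx | hx
    · obtain ⟨a, ha, b, hb, rfl⟩ := Finset.mem_sub.mp hx
      obtain ⟨ha0, han⟩ := hAb a ha
      obtain ⟨hb0, hbn⟩ := hBb b hb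
      by_cases hcase : k + 1 - n ≤ a - b ∧ a - b ≤ n - k - 1
      · exact Finset.mem_union_left _ (Finset.mem_union_left _
          (Finset.mem_Icc.mpr hcase))
      · rcases (by omega : n - k ≤ a - b ∨ n - k ≤ b - a) with h | h
        · refine Finset.mem_union_left _ (Finset.mem_union_right _ ?_)
          refine Finset.mem_image.mpr ⟨n - (a - b), key1 _ ⟨a, ha, b, hb, rfl⟩ h, by ring⟩
        · refine Finset.mem_union_right _ ?_
          refine Finset.mem_image.mpr ⟨n - (b - a), key2 _ ⟨b, hb, a, ha, rfl⟩ h, by ring⟩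
    · obtain ⟨b, hb, a, ha, rfl⟩ := Finset.mem_sub.mp hx
      obtain ⟨ha0, han⟩ := hAb a ha
      obtain ⟨hb0, hbn⟩ := hBb b hb
      by_cases hcase : k + 1 - n ≤ b - a ∧ b - a ≤ n - k - 1
      · exact Finset.mem_union_left _ (Finset.mem_union_left _
          (Finset.mem_Icc.mpr hcase))
      · rcases (by omega : n - k ≤ b - a ∨ n - k ≤ a - b) with h | h
        · refine Finset.mem_union_left _ (Finset.mem_union_right _ ?_)
          refine Finset.mem_image.mpr ⟨n - (b - a), key2 _ ⟨b, hb, a, ha, rfl⟩ h, by ring⟩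
        · refine Finset.mem_union_right _ ?_
          refine Finset.mem_image.mpr ⟨n - (a - b), key1 _ ⟨a, ha, b, hb, rfl⟩ h, by ring⟩
  have cV1 : (Finset.Icc (k + 1 - n) (n - k - 1)).card = (2 * n - 2 * k - 1).toNat := by
    rw [Int.card_Icc]; congr 1; ring
  have hhigh : ((A - B) ∪ (B - A)).card ≤ (2 * n - 2 * k - 1).toNat + U.card + U.card := by
    calc ((A - B) ∪ (B - A)).card
        ≤ (Finset.Icc (k + 1 - n) (n - k - 1) ∪ U.image (fun u => n - u)
            ∪ U.image (fun u => u - n)).card := Finset.card_le_card hDsub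
      _ ≤ (Finset.Icc (k + 1 - n) (n - k - 1) ∪ U.image (fun u => n - u)).card
            + (U.image (fun u => u - n)).card := Finset.card_union_le _ _
      _ ≤ (Finset.Icc (k + 1 - n) (n - k - 1)).card + (U.image (fun u => n - u)).card
            + (U.image (fun u => u - n)).card := by
              gcongr; exact Finset.card_union_le _ _
      _ ≤ (2 * n - 2 * k - 1).toNat + U.card + U.card := by
              rw [cV1]
              exact add_le_add (add_le_add le_rfl Finset.card_image_le) Finset.card_image_le
  omega
end

section
/- Let ξ_{1,k}(N) = Σ_{n=2k}^{2N−2k} C(min{⌊n/2⌋, ⌊(2N−n)/2⌋}, k) count the unordered k-tuples of pairs from {0,...,N}² consisting of 2k distinct elements with all pairs having the same sum. Then ξ_{1,k}(N) ∼ (2/(2^k (k+1)!)) · N^{k+1} as N → ∞, i.e., ξ_{1,k}(N) · 2^k (k+1)! / (2 N^{k+1}) → 1. -/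
open Filter

noncomputable def xi (k N : ℕ) : ℕ :=
  ∑ n ∈ Finset.Icc (2 * k) (2 * N - 2 * k),
    Nat.choose (min (n / 2) ((2 * N - n) / 2)) k

namespace Aux

open Finset

def T (k L : ℕ) : ℕ := ∑ n ∈ range L, Nat.choose (n / 2) k

lemma T_even (k M : ℕ) : T k (2 * M) = 2 * Nat.choose M (k + 1) := by
  induction M with
  | zero => simp [T]
  | succ M ih =>
    have h1 : 2 * (M + 1) = (2 * M + 1) + 1 := by ring
    unfold T at *
    rw [h1, Finset.sum_range_succ, Finset.sum_range_succ, ih]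
    have e1 : (2 * M) / 2 = M := by omega
    have e2 : (2 * M + 1) / 2 = M := by omega
    rw [e1, e2, Nat.choose_succ_succ']
    ring

lemma T_odd (k M : ℕ) : T k (2 * M + 1) = 2 * Nat.choose M (k + 1) + Nat.choose M k := by
  unfold T
  rw [Finset.sum_range_succ, ← T_even k M]
  have e1 : (2 * M) / 2 = M := by omega
  rw [e1]
  rfl

lemma T_lb (k L : ℕ) : 2 * Nat.choose (L / 2) (k + 1) ≤ T k L := by
  rcases Nat.even_or_odd L with ⟨M, hM⟩ | ⟨M, hM⟩
  · subst hM
    rw [show M + M = 2 * M by ring, T_even]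
    simp [Nat.mul_div_cancel_left]
  · subst hM
    rw [T_odd, show (2 * M + 1) / 2 = M by omega]
    omega

lemma T_ub (k L : ℕ) : T k L ≤ 2 * Nat.choose (L / 2) (k + 1) + Nat.choose (L / 2) k := by
  rcases Nat.even_or_odd L with ⟨M, hM⟩ | ⟨M, hM⟩
  · subst hM
    rw [show M + M = 2 * M by ring, T_even]
    simp [Nat.mul_div_cancel_left]
  · subst hM
    rw [T_odd, show (2 * M + 1) / 2 = M by omega]

lemma xi_eq (k N : ℕ) (h : 2 * k ≤ N) : xi k N = T k (N + 1) + T k N := by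
  unfold xi
  have key : ∑ n ∈ Finset.Icc (2 * k) (2 * N - 2 * k),
        Nat.choose (min (n / 2) ((2 * N - n) / 2)) k
      = ∑ n ∈ Finset.Ico 0 (2 * N - 2 * k + 1),
        Nat.choose (min (n / 2) ((2 * N - n) / 2)) k := by
    apply Finset.sum_subset
    · intro n hn
      simp only [Finset.mem_Icc] at hn
      simp only [Finset.mem_Ico]
      omega
    · intro n hn hn2
      simp only [Finset.mem_Ico] at hn
      simp only [Finset.mem_Icc] at hn2
      have h1 : n < 2 * k := by omega
      have h2 : n / 2 < k := by omega
      exact Nat.choose_eq_zero_of_lt (lt_of_le_of_lt (min_le_left _ _) h2)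
  rw [key, ← Finset.sum_Ico_consecutive _ (by omega : 0 ≤ N + 1)
      (by omega : N + 1 ≤ 2 * N - 2 * k + 1)]
  have first : ∑ n ∈ Finset.Ico 0 (N + 1),
      Nat.choose (min (n / 2) ((2 * N - n) / 2)) k = T k (N + 1) := by
    rw [T, Finset.range_eq_Ico]
    apply Finset.sum_congr rfl
    intro n hn
    simp only [Finset.mem_Ico] at hn
    have : n / 2 ≤ (2 * N - n) / 2 := Nat.div_le_div_right (by omega)
    rw [min_eq_left this]
  have second : ∑ n ∈ Finset.Ico (N + 1) (2 * N - 2 * k + 1),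
      Nat.choose (min (n / 2) ((2 * N - n) / 2)) k = T k N := by
    have step1 : ∑ n ∈ Finset.Ico (N + 1) (2 * N - 2 * k + 1),
        Nat.choose (min (n / 2) ((2 * N - n) / 2)) k
        = ∑ m ∈ Finset.Ico (2 * k) N, Nat.choose (m / 2) k := by
      apply Finset.sum_nbij' (i := fun n => 2 * N - n) (j := fun m => 2 * N - m)
      · intro a ha
        simp only [Finset.mem_Ico] at ha ⊢
        omega
      · intro a ha
        simp only [Finset.mem_Ico] at ha ⊢
        omega
      · intro a ha
        simp only [Finset.mem_Ico] at ha
        omega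
      · intro a ha
        simp only [Finset.mem_Ico] at ha
        omega
      · intro a ha
        simp only [Finset.mem_Ico] at ha
        have : (2 * N - a) / 2 ≤ a / 2 := Nat.div_le_div_right (by omega)
        rw [min_eq_right this]
    rw [step1, T, Finset.range_eq_Ico]
    apply Finset.sum_subset
    · intro n hn
      simp only [Finset.mem_Ico] at hn ⊢
      omega
    · intro n hn hn2
      simp only [Finset.mem_Ico] at hn hn2
      have : n / 2 < k := by omega
      exact Nat.choose_eq_zero_of_lt this
  rw [first, second]

lemma lim_aff (c : ℝ) : Tendsto (fun N : ℕ => ((N : ℝ) + c) / N) atTop (nhds 1) := by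
  have h0 : Tendsto (fun N : ℕ => c / (N : ℝ)) atTop (nhds 0) :=
    tendsto_const_div_atTop_nhds_zero_nat c
  have h1 : Tendsto (fun N : ℕ => 1 + c / (N : ℝ)) atTop (nhds 1) := by
    simpa using tendsto_const_nhds.add h0
  apply h1.congr'
  filter_upwards [eventually_ge_atTop 1] with N hN
  have : (N : ℝ) ≠ 0 := by
    have h0 : (0 : ℝ) < N := by exact_mod_cast (by omega : 0 < N)
    exact h0.ne'
  field_simp

lemma factor_lim (a i : ℕ) (ha : a ≤ 1) :
    Tendsto (fun N : ℕ => 2 * (((N + a) / 2 - i : ℕ) : ℝ) / N) atTop (nhds 1) := by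
  have hlow : Tendsto (fun N : ℕ => ((N : ℝ) + (-(2 * (i : ℝ) + 1))) / N) atTop (nhds 1) :=
    lim_aff _
  have hhigh : Tendsto (fun N : ℕ => ((N : ℝ) + 1) / N) atTop (nhds 1) :=
    lim_aff 1
  apply tendsto_of_tendsto_of_tendsto_of_le_of_le' hlow hhigh
  · filter_upwards [eventually_ge_atTop (2 * i + 2)] with N hN
    have hnat : N - (2 * i + 1) ≤ 2 * ((N + a) / 2 - i) := by omega
    have hpos : (0 : ℝ) < N := by exact_mod_cast (by omega : 0 < N)
    rw [div_le_div_iff_of_pos_right hpos]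
    have : ((N - (2 * i + 1) : ℕ) : ℝ) ≤ ((2 * ((N + a) / 2 - i) : ℕ) : ℝ) := by
      exact_mod_cast hnat
    calc (N : ℝ) + (-(2 * (i : ℝ) + 1)) = ((N - (2 * i + 1) : ℕ) : ℝ) := by
          have : 2 * i + 1 ≤ N := by omega
          push_cast [this]; ring
      _ ≤ ((2 * ((N + a) / 2 - i) : ℕ) : ℝ) := this
      _ = 2 * (((N + a) / 2 - i : ℕ) : ℝ) := by push_cast; ring
  · filter_upwards [eventually_ge_atTop (2 * i + 2)] with N hN
    have hnat : 2 * ((N + a) / 2 - i) ≤ N + 1 := by omega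
    have hpos : (0 : ℝ) < N := by exact_mod_cast (by omega : 0 < N)
    rw [div_le_div_iff_of_pos_right hpos]
    calc 2 * (((N + a) / 2 - i : ℕ) : ℝ) = ((2 * ((N + a) / 2 - i) : ℕ) : ℝ) := by
          push_cast; ring
      _ ≤ ((N + 1 : ℕ) : ℝ) := by exact_mod_cast hnat
      _ = (N : ℝ) + 1 := by push_cast; ring

lemma desc_lim (k a : ℕ) (ha : a ≤ 1) :
    Tendsto (fun N : ℕ =>
        (2 : ℝ) ^ k * (Nat.descFactorial ((N + a) / 2) (k + 1) : ℝ) / (N : ℝ) ^ (k + 1))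
      atTop (nhds (1 / 2)) := by
  have hprod : Tendsto (fun N : ℕ =>
      (1 / 2 : ℝ) * ∏ i ∈ Finset.range (k + 1), (2 * (((N + a) / 2 - i : ℕ) : ℝ) / N))
      atTop (nhds (1 / 2)) := by
    have h1 : Tendsto (fun N : ℕ =>
        ∏ i ∈ Finset.range (k + 1), (2 * (((N + a) / 2 - i : ℕ) : ℝ) / N))
        atTop (nhds (∏ _i ∈ Finset.range (k + 1), (1 : ℝ))) := by
      apply tendsto_finset_prod
      intro i _
      exact factor_lim a i ha
    simpa using tendsto_const_nhds.mul h1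
  apply hprod.congr'
  filter_upwards [eventually_ge_atTop 1] with N hN
  have hNpos : (0 : ℝ) < N := by exact_mod_cast (by omega : 0 < N)
  rw [Nat.descFactorial_eq_prod_range]
  push_cast
  rw [Finset.prod_div_distrib, Finset.prod_mul_distrib]
  simp only [Finset.prod_const, Finset.card_range]
  field_simp
  ring

lemma err_lim (k : ℕ) (c : ℝ) :
    Tendsto (fun N : ℕ =>
        c * ((Nat.choose ((N + 1) / 2) k : ℝ) + (Nat.choose (N / 2) k : ℝ)) / (N : ℝ) ^ (k + 1))
      atTop (nhds 0) := by
  have hub : Tendsto (fun N : ℕ => (2 * |c|) / (N : ℝ)) atTop (nhds 0) := by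
    simpa using tendsto_const_div_atTop_nhds_zero_nat (2 * |c|)
  have hlb : Tendsto (fun N : ℕ => -((2 * |c|) / (N : ℝ))) atTop (nhds 0) := by
    simpa using hub.neg
  apply tendsto_of_tendsto_of_tendsto_of_le_of_le' hlb hub
  all_goals
    filter_upwards [eventually_ge_atTop 1] with N hN
  all_goals
    have hNpos : (0 : ℝ) < N := by exact_mod_cast (by omega : 0 < N)
    have hb1 : (Nat.choose ((N + 1) / 2) k : ℝ) ≤ (N : ℝ) ^ k := by
      have h1 : Nat.choose ((N + 1) / 2) k ≤ ((N + 1) / 2) ^ k := Nat.choose_le_pow _ _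
      have h2 : ((N + 1) / 2) ^ k ≤ N ^ k := Nat.pow_le_pow_left (by omega) k
      exact_mod_cast le_trans h1 h2
    have hb2 : (Nat.choose (N / 2) k : ℝ) ≤ (N : ℝ) ^ k := by
      have h1 : Nat.choose (N / 2) k ≤ (N / 2) ^ k := Nat.choose_le_pow _ _
      have h2 : (N / 2) ^ k ≤ N ^ k := Nat.pow_le_pow_left (by omega) k
      exact_mod_cast le_trans h1 h2
    have hnn1 : (0 : ℝ) ≤ (Nat.choose ((N + 1) / 2) k : ℝ) := by positivity
    have hnn2 : (0 : ℝ) ≤ (Nat.choose (N / 2) k : ℝ) := by positivity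
    have hpow : (0 : ℝ) < (N : ℝ) ^ (k + 1) := by positivity
    have habs : |c * ((Nat.choose ((N + 1) / 2) k : ℝ) + (Nat.choose (N / 2) k : ℝ))
        / (N : ℝ) ^ (k + 1)| ≤ (2 * |c|) / (N : ℝ) := by
      rw [abs_div, abs_of_pos hpow, abs_mul,
        abs_of_nonneg (by positivity : (0:ℝ) ≤ (Nat.choose ((N + 1) / 2) k : ℝ)
          + (Nat.choose (N / 2) k : ℝ))]
      rw [div_le_div_iff₀ hpow hNpos]
      have hsum : (Nat.choose ((N + 1) / 2) k : ℝ) + (Nat.choose (N / 2) k : ℝ)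
          ≤ 2 * (N : ℝ) ^ k := by linarith
      calc |c| * ((Nat.choose ((N + 1) / 2) k : ℝ) + (Nat.choose (N / 2) k : ℝ)) * (N : ℝ)
          ≤ |c| * (2 * (N : ℝ) ^ k) * (N : ℝ) := by
            have := abs_nonneg c
            apply mul_le_mul_of_nonneg_right _ (le_of_lt hNpos)
            exact mul_le_mul_of_nonneg_left hsum this
        _ = 2 * |c| * (N : ℝ) ^ (k + 1) := by ring
  · exact neg_le_of_abs_le habs
  · exact le_of_abs_le habs

end Aux

theorem stmt19 (k : ℕ) (hk : 1 ≤ k) :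
    Tendsto
      (fun N : ℕ =>
        (xi k N : ℝ) * 2 ^ k * (Nat.factorial (k + 1)) / (2 * (N : ℝ) ^ (k + 1)))
      atTop (nhds 1) := by
  classical
  set L : ℕ → ℝ := fun N =>
    (2 : ℝ) ^ k * (Nat.descFactorial ((N + 1) / 2) (k + 1) : ℝ) / (N : ℝ) ^ (k + 1)
    + (2 : ℝ) ^ k * (Nat.descFactorial ((N + 0) / 2) (k + 1) : ℝ) / (N : ℝ) ^ (k + 1) with hL
  set E : ℕ → ℝ := fun N =>
    ((2 : ℝ) ^ k * (Nat.factorial (k + 1)) / 2)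
      * ((Nat.choose ((N + 1) / 2) k : ℝ) + (Nat.choose (N / 2) k : ℝ)) / (N : ℝ) ^ (k + 1)
    with hE
  have hLlim : Tendsto L atTop (nhds 1) := by
    have h1 := Aux.desc_lim k 1 (le_refl 1)
    have h0 := Aux.desc_lim k 0 (by norm_num)
    have hsum := h1.add h0
    have h12 : (1 : ℝ) / 2 + 1 / 2 = 1 := by norm_num
    rw [h12] at hsum
    exact hsum
  have hElim : Tendsto E atTop (nhds 0) := Aux.err_lim k _
  have hUlim : Tendsto (fun N => L N + E N) atTop (nhds 1) := by
    simpa using hLlim.add hElim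
  apply tendsto_of_tendsto_of_tendsto_of_le_of_le' hLlim hUlim
  · -- L N ≤ F N eventually
    filter_upwards [eventually_ge_atTop (2 * k + 1)] with N hN
    have hxi := Aux.xi_eq k N (by omega)
    have hnat : 2 * Nat.choose ((N + 1) / 2) (k + 1) + 2 * Nat.choose (N / 2) (k + 1)
        ≤ xi k N := by
      have l1 := Aux.T_lb k (N + 1)
      have l2 := Aux.T_lb k N
      omega
    have hNpos : (0 : ℝ) < N := by exact_mod_cast (by omega : 0 < N)
    have hpow : (0 : ℝ) < (N : ℝ) ^ (k + 1) := by positivity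
    have hLe : L N = ((2 * Nat.choose ((N + 1) / 2) (k + 1)
        + 2 * Nat.choose (N / 2) (k + 1) : ℕ) : ℝ) * 2 ^ k * (Nat.factorial (k + 1))
        / (2 * (N : ℝ) ^ (k + 1)) := by
      rw [hL]
      simp only [Nat.add_zero]
      rw [show (Nat.descFactorial ((N + 1) / 2) (k + 1) : ℝ)
          = (Nat.factorial (k + 1) : ℝ) * (Nat.choose ((N + 1) / 2) (k + 1) : ℝ) by
            exact_mod_cast Nat.descFactorial_eq_factorial_mul_choose _ _,
        show (Nat.descFactorial (N / 2) (k + 1) : ℝ)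
          = (Nat.factorial (k + 1) : ℝ) * (Nat.choose (N / 2) (k + 1) : ℝ) by
            exact_mod_cast Nat.descFactorial_eq_factorial_mul_choose _ _]
      push_cast
      field_simp
    rw [hLe]
    gcongr
  · -- F N ≤ L N + E N eventually
    filter_upwards [eventually_ge_atTop (2 * k + 1)] with N hN
    have hxi := Aux.xi_eq k N (by omega)
    have hnat : xi k N ≤ 2 * Nat.choose ((N + 1) / 2) (k + 1) + 2 * Nat.choose (N / 2) (k + 1)
        + Nat.choose ((N + 1) / 2) k + Nat.choose (N / 2) k := by
      have u1 := Aux.T_ub k (N + 1)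
      have u2 := Aux.T_ub k N
      omega
    have hNpos : (0 : ℝ) < N := by exact_mod_cast (by omega : 0 < N)
    have hpow : (0 : ℝ) < (N : ℝ) ^ (k + 1) := by positivity
    have hUe : L N + E N = ((2 * Nat.choose ((N + 1) / 2) (k + 1)
        + 2 * Nat.choose (N / 2) (k + 1)
        + Nat.choose ((N + 1) / 2) k + Nat.choose (N / 2) k : ℕ) : ℝ)
        * 2 ^ k * (Nat.factorial (k + 1)) / (2 * (N : ℝ) ^ (k + 1)) := by
      rw [hL, hE]
      simp only [Nat.add_zero]
      rw [show (Nat.descFactorial ((N + 1) / 2) (k + 1) : ℝ)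
          = (Nat.factorial (k + 1) : ℝ) * (Nat.choose ((N + 1) / 2) (k + 1) : ℝ) by
            exact_mod_cast Nat.descFactorial_eq_factorial_mul_choose _ _,
        show (Nat.descFactorial (N / 2) (k + 1) : ℝ)
          = (Nat.factorial (k + 1) : ℝ) * (Nat.choose (N / 2) (k + 1) : ℝ) by
            exact_mod_cast Nat.descFactorial_eq_factorial_mul_choose _ _]
      push_cast
      field_simp
      ring
    rw [hUe]
    gcongr
end
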